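/- A simplicial set X is κ-presentable (a κ-compact object of the category of simplicial sets, for κ a regular uncountable cardinal) if and only if its set of nondegenerate simplices has cardinality < κ. -/

import Mathlib

open CategoryTheory CategoryTheory.Limits Opposite Simplicial

universe u

/-- A simplex `x ∈ X_n` of a simplicial set is *degenerate* if it is the image of a simplex
of strictly smaller dimension under some simplicial operator. -/
def SSet.IsDegenerateSimplex (X : SSet.{u}) (n : ℕ) (x : X.obj (op ⦋n⦌)) : Prop :=
  ∃ (m : ℕ) (_ : m < n) (f : (⦋n⦌ : SimplexCategory) ⟶ ⦋m⦌) (y : X.obj (op ⦋m⦌)),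
    x = X.map f.op y

/-- The type of nondegenerate simplices (of all dimensions) of a simplicial set. -/
def SSet.NondegenerateSimplices (X : SSet.{u}) : Type u :=
  Σ n : ℕ, {x : X.obj (op ⦋n⦌) // ¬ X.IsDegenerateSimplex n x}

/-- A category is `κ`-filtered if every diagram indexed by a small category with fewer than
`κ` morphisms admits a cocone. -/
def IsCardinalFilteredCat (J : Type u) [SmallCategory J] (κ : Cardinal.{u}) : Prop :=
  ∀ (K : Type u) (_ : SmallCategory K),
    Cardinal.mk (Σ (a : K) (b : K), a ⟶ b) < κ → ∀ F : K ⥤ J, Nonempty (Limits.Cocone F)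

/-- A simplicial set `X` is `κ`-presentable (`κ`-compact) if `Hom(X, −)` preserves colimits
of all `κ`-filtered shapes. -/
def SSet.IsCardinalPresentable (X : SSet.{u}) (κ : Cardinal.{u}) : Prop :=
  ∀ (J : Type u) (_ : SmallCategory J), IsCardinalFilteredCat J κ →
    Nonempty (Limits.PreservesColimitsOfShape J (coyoneda.obj (op X)))

namespace SSetPresentableAux

instance (a b : SimplexCategory) : Countable (a ⟶ b) := by
  have : Function.Injective (fun f : a ⟶ b => (f.toOrderHom : Fin (a.len + 1) → Fin (b.len + 1))) := by
    intro f g h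
    exact SimplexCategory.Hom.ext _ _ (OrderHom.ext _ _ h)
  exact Function.Injective.countable this

abbrev Simplices (X : SSet.{u}) : Type u := Σ n : ℕ, X.obj (op ⦋n⦌)

variable {κ : Cardinal.{u}}

section Filtered

variable {J : Type u} [SmallCategory J]

theorem isFiltered_of_cardinalFiltered (hJ : IsCardinalFilteredCat J κ)
    (hκ : Cardinal.aleph0 < κ) : IsFiltered J := by
  rw [IsFiltered.iff_cocone_nonempty.{u}]
  intro K _ _ F
  exact hJ K _ (lt_trans (Cardinal.mk_lt_aleph0_iff.2 (by infer_instance)) hκ) F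

/-- Upper bound for a small family of objects. -/
theorem exists_upper_bound (hJ : IsCardinalFilteredCat J κ) (hκ : Cardinal.aleph0 ≤ κ)
    {I : Type u} (hI : Cardinal.mk I < κ) (k : I → J) :
    ∃ j' : J, ∀ i, Nonempty (k i ⟶ j') := by
  have hcard : Cardinal.mk (Σ (a : Discrete I) (b : Discrete I), a ⟶ b) < κ := by
    have : Function.Injective (fun p : (Σ (a : Discrete I) (b : Discrete I), a ⟶ b) =>
        (p.1.as, p.2.1.as)) := by
      rintro ⟨⟨a⟩, ⟨b⟩, ⟨⟨h⟩⟩⟩ ⟨⟨a'⟩, ⟨b'⟩, ⟨⟨h'⟩⟩⟩ hp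
      simp only [Prod.mk.injEq] at hp
      obtain ⟨rfl, rfl⟩ := hp
      rfl
    refine lt_of_le_of_lt (Cardinal.mk_le_of_injective this) ?_
    rw [Cardinal.mk_prod]; simp only [Cardinal.lift_id]
    exact Cardinal.mul_lt_of_lt hκ hI hI
  obtain ⟨c⟩ := hJ (Discrete I) _ hcard (Discrete.functor k)
  exact ⟨c.pt, fun i => ⟨c.ι.app ⟨i⟩⟩⟩

instance (I : Type u) (a b : WidePushoutShape I) : Subsingleton (a ⟶ b) := by
  constructor
  intro f g
  change WidePushoutShape.Hom a b at f g
  cases f <;> cases g <;> rfl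

/-- Coequalizing a small family of cospans: given `u i : j ⟶ k i`, find `j'`, `v : j ⟶ j'`,
`w i : k i ⟶ j'` with `u i ≫ w i = v`. -/
theorem exists_span_bound (hJ : IsCardinalFilteredCat J κ) (hκ : Cardinal.aleph0 ≤ κ)
    {I : Type u} (hI : Cardinal.mk I < κ) (j : J) (k : I → J) (u : ∀ i, j ⟶ k i) :
    ∃ (j' : J) (v : j ⟶ j') (w : ∀ i, k i ⟶ j'), ∀ i, u i ≫ w i = v := by
  have hcard : Cardinal.mk (Σ (a : WidePushoutShape I) (b : WidePushoutShape I), a ⟶ b) < κ := by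
    have : Function.Injective (fun p : (Σ (a : WidePushoutShape I) (b : WidePushoutShape I), a ⟶ b)
        => (p.1, p.2.1)) := by
      rintro ⟨a, b, f⟩ ⟨a', b', f'⟩ hp
      simp only [Prod.mk.injEq] at hp
      obtain ⟨rfl, rfl⟩ := hp
      rw [Subsingleton.elim f f']
    refine lt_of_le_of_lt (Cardinal.mk_le_of_injective this) ?_
    rw [Cardinal.mk_prod]; simp only [Cardinal.lift_id]
    have hO : Cardinal.mk (WidePushoutShape I) < κ := by
      have : Cardinal.mk (WidePushoutShape I) = Cardinal.mk (Option I) := rfl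
      rw [this, Cardinal.mk_option]
      exact Cardinal.add_lt_of_lt hκ hI (lt_of_lt_of_le Cardinal.one_lt_aleph0 hκ)
    exact Cardinal.mul_lt_of_lt hκ hO hO
  obtain ⟨c⟩ := hJ (WidePushoutShape I) _ hcard (WidePushoutShape.wideSpan j k u)
  refine ⟨c.pt, c.ι.app none, fun i => c.ι.app (some i), fun i => ?_⟩
  exact c.w (WidePushoutShape.Hom.init i)

end Filtered

theorem exists_nondegenerate (X : SSet.{u}) :
    ∀ (n : ℕ) (x : X.obj (op ⦋n⦌)), ∃ (m : ℕ) (f : (⦋n⦌ : SimplexCategory) ⟶ ⦋m⦌)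
      (y : X.obj (op ⦋m⦌)), ¬ X.IsDegenerateSimplex m y ∧ x = X.map f.op y := by
  intro n
  induction n using Nat.strong_induction_on with
  | _ n ih =>
    intro x
    by_cases h : X.IsDegenerateSimplex n x
    · obtain ⟨m, hm, f, y, rfl⟩ := h
      obtain ⟨m', g, z, hz, rfl⟩ := ih m hm y
      refine ⟨m', f ≫ g, z, hz, ?_⟩
      rw [op_comp, X.map_comp]; rfl
    · exact ⟨n, 𝟙 _, x, h, by simp⟩

theorem mk_simplices_lt_iff (X : SSet.{u}) {κ : Cardinal.{u}} (hκ : Cardinal.aleph0 < κ) :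
    Cardinal.mk (Simplices X) < κ ↔ Cardinal.mk X.NondegenerateSimplices < κ := by
  constructor
  · intro h
    refine lt_of_le_of_lt ?_ h
    have : Cardinal.mk X.NondegenerateSimplices = Cardinal.sum
        (fun n : ℕ => Cardinal.mk {x : X.obj (op ⦋n⦌) // ¬ X.IsDegenerateSimplex n x}) :=
      Cardinal.mk_sigma _
    rw [this, Cardinal.mk_sigma]
    exact Cardinal.sum_le_sum _ _ (fun n => Cardinal.mk_subtype_le _)
  · intro h
    have hsurj : Function.Surjective (fun q : Σ (p : X.NondegenerateSimplices),
        ULift.{u} ((n : ℕ) × ((⦋n⦌ : SimplexCategory) ⟶ ⦋p.1⦌)) =>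
        (⟨q.2.down.1, X.map q.2.down.2.op q.1.2.1⟩ : Simplices X)) := by
      rintro ⟨n, x⟩
      obtain ⟨m, f, y, hy, rfl⟩ := exists_nondegenerate X n x
      exact ⟨⟨⟨m, y, hy⟩, ULift.up ⟨n, f⟩⟩, rfl⟩
    refine lt_of_le_of_lt (Cardinal.mk_le_of_surjective hsurj) ?_
    have : Cardinal.mk (Σ (p : X.NondegenerateSimplices),
        ULift.{u} ((n : ℕ) × ((⦋n⦌ : SimplexCategory) ⟶ ⦋p.1⦌)))
          ≤ Cardinal.mk X.NondegenerateSimplices * Cardinal.aleph0 := by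
      rw [Cardinal.mk_sigma, ← Cardinal.sum_const']
      exact Cardinal.sum_le_sum _ _ (fun p => Cardinal.mk_le_aleph0)
    exact lt_of_le_of_lt this (Cardinal.mul_lt_of_lt hκ.le h hκ)

theorem mk_countable_sigma_lt (hκ : Cardinal.aleph0 < κ) {A : Type u}
    (hA : Cardinal.mk A < κ) (B : A → Type u) [∀ a, Countable (B a)] :
    Cardinal.mk (Σ a, B a) < κ := by
  have : Cardinal.mk (Σ a, B a) ≤ Cardinal.mk A * Cardinal.aleph0 := by
    rw [Cardinal.mk_sigma, ← Cardinal.sum_const']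
    exact Cardinal.sum_le_sum _ _ (fun a => Cardinal.mk_le_aleph0)
  exact lt_of_le_of_lt this (Cardinal.mul_lt_of_lt hκ.le hA hκ)

section DirA

variable {J : Type u} [SmallCategory J]

theorem presentable_of_small (X : SSet.{u}) (hκ : Cardinal.aleph0 < κ)
    (hS : Cardinal.mk (Simplices X) < κ) (hJ : IsCardinalFilteredCat J κ) :
    PreservesColimitsOfShape J (coyoneda.obj (op X)) := by
  haveI : IsFiltered J := isFiltered_of_cardinalFiltered hJ hκ
  constructor
  intro F
  constructor
  intro c hc
  have hcn : ∀ o : SimplexCategoryᵒᵖ,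
      IsColimit (((evaluation SimplexCategoryᵒᵖ (Type u)).obj o).mapCocone c) :=
    fun o => isColimitOfPreserves _ hc
  refine ⟨Types.FilteredColimit.isColimitOf _ _ ?_ ?_⟩
  · -- surjectivity
    intro f
    have step1 : ∀ s : Simplices X, ∃ (j : J) (y : (F.obj j).obj (op ⦋s.1⦌)),
        (c.ι.app j).app (op ⦋s.1⦌) y = f.app (op ⦋s.1⦌) s.2 := by
      intro s
      obtain ⟨j, y, hy⟩ := Types.jointly_surjective _ (hcn (op ⦋s.1⦌)) (f.app (op ⦋s.1⦌) s.2)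
      exact ⟨j, y, hy⟩
    choose j0 y0 hy0 using step1
    obtain ⟨j1, ht⟩ := exists_upper_bound hJ hκ.le hS j0
    let t : ∀ s, j0 s ⟶ j1 := fun s => (ht s).some
    let z : ∀ s : Simplices X, (F.obj j1).obj (op ⦋s.1⦌) :=
      fun s => (F.map (t s)).app (op ⦋s.1⦌) (y0 s)
    have hz : ∀ s : Simplices X, (c.ι.app j1).app (op ⦋s.1⦌) (z s) = f.app (op ⦋s.1⦌) s.2 := by
      intro s
      have h1 := types_congr_hom (NatTrans.congr_app (c.w (t s)) (op ⦋s.1⦌)) (y0 s)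
      simp only [NatTrans.comp_app, types_comp_apply, Functor.const_obj_obj] at h1
      exact h1.trans (hy0 s)
    -- relations
    have hR : Cardinal.mk (Σ s : Simplices X,
        ULift.{u} ((m : ℕ) × ((⦋m⦌ : SimplexCategory) ⟶ ⦋s.1⦌))) < κ :=
      mk_countable_sigma_lt hκ hS _
    have step3 : ∀ (s : Simplices X) (p : ULift.{u} ((m : ℕ) × ((⦋m⦌ : SimplexCategory) ⟶ ⦋s.1⦌))),
        ∃ (k : J) (u : j1 ⟶ k),
          (F.map u).app (op ⦋p.down.1⦌) ((F.obj j1).map p.down.2.op (z s)) =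
          (F.map u).app (op ⦋p.down.1⦌) (z ⟨p.down.1, X.map p.down.2.op s.2⟩) := by
      rintro ⟨n, x⟩ ⟨m, g⟩
      have hab : (c.ι.app j1).app (op ⦋m⦌) ((F.obj j1).map g.op (z ⟨n, x⟩)) =
          (c.ι.app j1).app (op ⦋m⦌) (z ⟨m, X.map g.op x⟩) := by
        have h2 := types_congr_hom ((c.ι.app j1).naturality g.op) (z ⟨n, x⟩)
        simp only [types_comp_apply] at h2
        rw [h2, hz ⟨n, x⟩, hz ⟨m, X.map g.op x⟩]
        exact (types_congr_hom (f.naturality g.op) x).symm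
      have hab' : (((evaluation SimplexCategoryᵒᵖ (Type u)).obj (op ⦋m⦌)).mapCocone c).ι.app j1
            ((F.obj j1).map g.op (z ⟨n, x⟩)) =
          (((evaluation SimplexCategoryᵒᵖ (Type u)).obj (op ⦋m⦌)).mapCocone c).ι.app j1
            (z ⟨m, X.map g.op x⟩) := hab
      rw [Types.FilteredColimit.isColimit_eq_iff _ (hcn (op ⦋m⦌))] at hab'
      obtain ⟨k, u, u', huv⟩ := hab' 
      refine ⟨IsFiltered.coeq u u', u ≫ IsFiltered.coeqHom u u', ?_⟩
      have h5 := congrArg ((F.map (IsFiltered.coeqHom u u')).app (op ⦋m⦌)) huv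
      conv_rhs => rw [IsFiltered.coeq_condition u u']
      rw [F.map_comp, F.map_comp]
      exact h5
    choose k1 u1 h1 using fun (r : Σ s : Simplices X,
        ULift.{u} ((m : ℕ) × ((⦋m⦌ : SimplexCategory) ⟶ ⦋s.1⦌))) => step3 r.1 r.2
    obtain ⟨j2, v, w, hw⟩ := exists_span_bound hJ hκ.le hR j1 k1 u1
    have hv : ∀ (s : Simplices X) (p : ULift.{u} ((m : ℕ) × ((⦋m⦌ : SimplexCategory) ⟶ ⦋s.1⦌))),
        (F.map v).app (op ⦋p.down.1⦌) ((F.obj j1).map p.down.2.op (z s)) =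
        (F.map v).app (op ⦋p.down.1⦌) (z ⟨p.down.1, X.map p.down.2.op s.2⟩) := by
      intro s p
      have h6 := congrArg ((F.map (w ⟨s, p⟩)).app (op ⦋p.down.1⦌)) (h1 ⟨s, p⟩)
      rw [← hw ⟨s, p⟩, F.map_comp]
      exact h6
    let g : X ⟶ F.obj j2 :=
      { app := fun o => TypeCat.ofHom fun x => (F.map v).app o (z ⟨o.unop.len, x⟩)
        naturality := by
          intro o o' φ
          ext x
          have h2 := types_congr_hom ((F.map v).naturality φ) (z ⟨o.unop.len, x⟩)
          simp only [types_comp_apply] at h2 ⊢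
          exact (hv ⟨o.unop.len, x⟩ (ULift.up ⟨o'.unop.len, φ.unop⟩)).symm.trans h2 }
    refine ⟨j2, g, ?_⟩
    apply NatTrans.ext
    ext o x
    have h3 := types_congr_hom (NatTrans.congr_app (c.w v) o) (z ⟨o.unop.len, x⟩)
    simp only [NatTrans.comp_app, types_comp_apply, Functor.const_obj_obj] at h3
    have h4 := hz ⟨o.unop.len, x⟩
    exact (h4.symm.trans h3.symm : f.app o x = _)
  · -- injectivity
    intro i j g g' hgg'
    have hgg : g ≫ c.ι.app i = g' ≫ c.ι.app j := hgg'
    let l := IsFiltered.leftToMax i j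
    let r := IsFiltered.rightToMax i j
    let k0 := IsFiltered.max i j
    have hkey : ∀ s : Simplices X,
        (c.ι.app k0).app (op ⦋s.1⦌) ((F.map l).app (op ⦋s.1⦌) (g.app (op ⦋s.1⦌) s.2)) =
        (c.ι.app k0).app (op ⦋s.1⦌) ((F.map r).app (op ⦋s.1⦌) (g'.app (op ⦋s.1⦌) s.2)) := by
      intro s
      have e1 := types_congr_hom (NatTrans.congr_app (c.w l) (op ⦋s.1⦌)) (g.app (op ⦋s.1⦌) s.2)
      have e2 := types_congr_hom (NatTrans.congr_app (c.w r) (op ⦋s.1⦌)) (g'.app (op ⦋s.1⦌) s.2)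
      have e3 := types_congr_hom (NatTrans.congr_app hgg (op ⦋s.1⦌)) s.2
      exact e1.trans (e3.trans e2.symm)
    have step : ∀ s : Simplices X, ∃ (k : J) (u : k0 ⟶ k),
        (F.map u).app (op ⦋s.1⦌) ((F.map l).app (op ⦋s.1⦌) (g.app (op ⦋s.1⦌) s.2)) =
        (F.map u).app (op ⦋s.1⦌) ((F.map r).app (op ⦋s.1⦌) (g'.app (op ⦋s.1⦌) s.2)) := by
      intro s
      have hab' : (((evaluation SimplexCategoryᵒᵖ (Type u)).obj (op ⦋s.1⦌)).mapCocone c).ι.app k0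
            ((F.map l).app (op ⦋s.1⦌) (g.app (op ⦋s.1⦌) s.2)) =
          (((evaluation SimplexCategoryᵒᵖ (Type u)).obj (op ⦋s.1⦌)).mapCocone c).ι.app k0
            ((F.map r).app (op ⦋s.1⦌) (g'.app (op ⦋s.1⦌) s.2)) := hkey s
      rw [Types.FilteredColimit.isColimit_eq_iff _ (hcn (op ⦋s.1⦌))] at hab'
      obtain ⟨k, u, u', huv⟩ := hab'
      refine ⟨IsFiltered.coeq u u', u ≫ IsFiltered.coeqHom u u', ?_⟩
      have h5 := congrArg ((F.map (IsFiltered.coeqHom u u')).app (op ⦋s.1⦌)) huv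
      conv_rhs => rw [IsFiltered.coeq_condition u u']
      rw [F.map_comp, F.map_comp]
      exact h5
    choose k1 u1 h1 using step
    obtain ⟨j2, v, w, hw⟩ := exists_span_bound hJ hκ.le hS k0 k1 u1
    refine ⟨j2, l ≫ v, r ≫ v, ?_⟩
    show g ≫ F.map (l ≫ v) = g' ≫ F.map (r ≫ v)
    apply NatTrans.ext
    ext o x
    have h6 := congrArg ((F.map (w ⟨o.unop.len, x⟩)).app o) (h1 ⟨o.unop.len, x⟩)
    show (F.map (l ≫ v)).app o (g.app o x) = (F.map (r ≫ v)).app o (g'.app o x)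
    rw [F.map_comp, F.map_comp, ← hw ⟨o.unop.len, x⟩, F.map_comp]
    exact h6

end DirA

variable (X : SSet.{u}) (κ : Cardinal.{u})

/-- A set of simplices closed under all simplicial operators. -/
def Closed (T : Set (Simplices X)) : Prop :=
  ∀ (n m : ℕ) (f : (⦋m⦌ : SimplexCategory) ⟶ ⦋n⦌) (x : X.obj (op ⦋n⦌)),
    (⟨n, x⟩ : Simplices X) ∈ T → (⟨m, X.map f.op x⟩ : Simplices X) ∈ T

/-- The poset of closed sets of simplices of size `< κ`. -/
def Sub : Type u := {T : Set (Simplices X) // Closed X T ∧ Cardinal.mk T < κ}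

instance : PartialOrder (Sub X κ) := Subtype.partialOrder _

/-- The subcomplex determined by a closed set of simplices. -/
def toSSet (T : Set (Simplices X)) (hT : Closed X T) : SSet.{u} where
  obj o := {x : X.obj o // (⟨o.unop.len, x⟩ : Simplices X) ∈ T}
  map {o o'} φ := TypeCat.ofHom fun x => ⟨X.map φ x.1, hT o.unop.len o'.unop.len φ.unop x.1 x.2⟩
  map_id o := by
    ext x
    exact FunctorToTypes.map_id_apply X x.1
  map_comp φ ψ := by
    ext x
    exact FunctorToTypes.map_comp_apply X _ _ x.1

/-- The diagram of subcomplexes. -/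
def subDiagram : Sub X κ ⥤ SSet.{u} where
  obj T := toSSet X T.1 T.2.1
  map {T T'} φ :=
    { app := fun o => TypeCat.ofHom fun (x : (toSSet X T.1 T.2.1).obj o) =>
        (⟨x.1, leOfHom φ x.2⟩ : (toSSet X T'.1 T'.2.1).obj o)
      naturality := fun o o' ψ => rfl }
  map_id T := rfl
  map_comp φ ψ := rfl

/-- The canonical cocone with point `X`. -/
def subCocone : Cocone (subDiagram X κ) where
  pt := X
  ι :=
    { app := fun T =>
        { app := fun o => TypeCat.ofHom fun (x : (toSSet X T.1 T.2.1).obj o) => x.1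
          naturality := fun o o' ψ => rfl }
      naturality := fun T T' φ => rfl }


variable {X κ}

theorem sub_cardinalFiltered (hreg : κ.IsRegular) :
    IsCardinalFilteredCat (Sub X κ) κ := by
  intro K _ hK G
  have hKcard : Cardinal.mk K < κ := by
    refine lt_of_le_of_lt (Cardinal.mk_le_of_injective
      (f := fun k : K => (⟨k, k, 𝟙 k⟩ : Σ (a : K) (b : K), a ⟶ b)) ?_) hK
    intro a b hab
    exact congrArg Sigma.fst hab
  have hclosed : Closed X (⋃ k, (G.obj k).1) := by
    intro n m f x hx
    obtain ⟨s, ⟨k, rfl⟩, hs⟩ := hx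
    exact Set.mem_iUnion.2 ⟨k, (G.obj k).2.1 n m f x hs⟩
  have hcard : Cardinal.mk (⋃ k, (G.obj k).1) < κ := by
    refine lt_of_le_of_lt Cardinal.mk_iUnion_le_sum_mk ?_
    exact Cardinal.sum_lt_of_isRegular hreg hKcard (fun k => (G.obj k).2.2)
  refine ⟨⟨⟨⋃ k, (G.obj k).1, hclosed, hcard⟩,
    ⟨fun k => homOfLE (Set.subset_iUnion (fun k => (G.obj k).1) k), ?_⟩⟩⟩
  intro k k' φ
  apply Subsingleton.elim

/-- The orbit of a single simplex. -/
def orbit (o : SimplexCategoryᵒᵖ) (x : X.obj o) : Set (Simplices X) :=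
  setOf fun s : Simplices X => ∃ f : (⦋s.1⦌ : SimplexCategory) ⟶ ⦋o.unop.len⦌, s.2 = X.map f.op x

theorem orbit_closed (o : SimplexCategoryᵒᵖ) (x : X.obj o) : Closed X (orbit o x) := by
  rintro n m g y ⟨f, hf⟩
  refine ⟨g ≫ f, ?_⟩
  dsimp at hf ⊢
  rw [hf]
  exact (FunctorToTypes.map_comp_apply X f.op g.op x).symm

theorem self_mem_orbit (o : SimplexCategoryᵒᵖ) (x : X.obj o) :
    (⟨o.unop.len, x⟩ : Simplices X) ∈ orbit o x := by
  refine ⟨𝟙 _, ?_⟩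
  dsimp
  exact (FunctorToTypes.map_id_apply X x).symm

theorem orbit_card (hκ : Cardinal.aleph0 < κ) (o : SimplexCategoryᵒᵖ) (x : X.obj o) :
    Cardinal.mk (orbit o x) < κ := by
  have hsurj : Function.Surjective (fun p : ULift.{u}
      ((m : ℕ) × ((⦋m⦌ : SimplexCategory) ⟶ ⦋o.unop.len⦌)) =>
      (⟨⟨p.down.1, X.map p.down.2.op x⟩, ⟨p.down.2, rfl⟩⟩ : orbit o x)) := by
    rintro ⟨⟨n, y⟩, f, hf⟩
    exact ⟨ULift.up ⟨n, f⟩, Subtype.ext (congrArg (Sigma.mk n) hf.symm)⟩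
  exact lt_of_le_of_lt ((Cardinal.mk_le_of_surjective hsurj).trans Cardinal.mk_le_aleph0) hκ

noncomputable def isColimit_subCocone (hreg : κ.IsRegular) (hκ : Cardinal.aleph0 < κ) :
    IsColimit (subCocone X κ) := by
  haveI : IsFiltered (Sub X κ) :=
    isFiltered_of_cardinalFiltered (sub_cardinalFiltered hreg) hκ
  apply evaluationJointlyReflectsColimits
  intro o
  apply Types.FilteredColimit.isColimitOf
  · intro x
    refine ⟨⟨orbit o x, orbit_closed o x, orbit_card hκ o x⟩, ⟨x, self_mem_orbit o x⟩, rfl⟩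
  · intro T T' a b h
    have h' : a.1 = b.1 := h
    refine ⟨⟨T.1 ∪ T'.1, ?_, ?_⟩, homOfLE (by exact Set.subset_union_left),
      homOfLE (by exact Set.subset_union_right), ?_⟩
    · intro n m f y hy
      rcases hy with hy | hy
      · exact Or.inl (T.2.1 n m f y hy)
      · exact Or.inr (T'.2.1 n m f y hy)
    · exact lt_of_le_of_lt (Cardinal.mk_union_le _ _)
        (Cardinal.add_lt_of_lt hreg.aleph0_le T.2.2 T'.2.2)
    · exact Subtype.ext h'

theorem small_of_presentable (hreg : κ.IsRegular) (hκ : Cardinal.aleph0 < κ)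
    (hP : Nonempty (PreservesColimitsOfShape (Sub X κ) (coyoneda.obj (op X)))) :
    Cardinal.mk (Simplices X) < κ := by
  obtain ⟨hP⟩ := hP
  have hc' := isColimitOfPreserves (coyoneda.obj (op X)) (isColimit_subCocone (X := X) hreg hκ)
  obtain ⟨T, g, hg⟩ := Types.jointly_surjective _ hc' (𝟙 X)
  have hg' : g ≫ (subCocone X κ).ι.app T = 𝟙 X := hg
  have hmem : ∀ s : Simplices X, s ∈ T.1 := by
    rintro ⟨n, x⟩
    have h := types_congr_hom (NatTrans.congr_app hg' (op ⦋n⦌)) x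
    have h3 : ((g.app (op ⦋n⦌) x).1 : X.obj (op ⦋n⦌)) = x := h
    have h2 := (g.app (op ⦋n⦌) x).2
    exact h3 ▸ h2
  refine lt_of_le_of_lt (Cardinal.mk_le_of_injective
    (f := fun s : Simplices X => (⟨s, hmem s⟩ : T.1)) ?_) T.2.2
  intro a b hab
  exact congrArg Subtype.val hab

end SSetPresentableAux

/-- A simplicial set is `κ`-presentable, for `κ` a regular uncountable cardinal, if and only
if its set of nondegenerate simplices has cardinality `< κ`. -/
theorem sset_isCardinalPresentable_iff_nondegenerate_lt
    (X : SSet.{u}) (κ : Cardinal.{u}) (hreg : κ.IsRegular) (hκ : Cardinal.aleph0 < κ) :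
    X.IsCardinalPresentable κ ↔ Cardinal.mk X.NondegenerateSimplices < κ := by
  rw [← SSetPresentableAux.mk_simplices_lt_iff X hκ]
  constructor
  · intro hP
    exact SSetPresentableAux.small_of_presentable hreg hκ
      (hP (SSetPresentableAux.Sub X κ) _ (SSetPresentableAux.sub_cardinalFiltered hreg))
  · intro hS J _ hJ
    exact ⟨SSetPresentableAux.presentable_of_small X hκ hS hJ⟩
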